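/- arXiv:1904.12479 — 2 statements merged into one kernel-verified Lean document; each statement's English description precedes it below -/
import Mathlib

section
/- Let v : ℕ → ℝ² be given by v m = (m-1, -m), and for each m let K m = {a • v m + b • v (m+1) | a, b ∈ ℝ, a ≥ 0, b ≥ 0} ⊆ ℝ². Then for every t ≥ 0, the point (t, -t) lies in the topological closure of ⋃_{m ∈ ℕ} K m. -/
noncomputable def v (m : ℕ) : ℝ × ℝ := ((m : ℝ) - 1, -(m : ℝ))

noncomputable def K (m : ℕ) : Set (ℝ × ℝ) :=
  {x | ∃ a b : ℝ, 0 ≤ a ∧ 0 ≤ b ∧ x = a • v m + b • v (m + 1)}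

theorem stmt_1 (t : ℝ) (ht : 0 ≤ t) :
    ((t, -t) : ℝ × ℝ) ∈ closure (⋃ m : ℕ, K m) := by
  have hmem : ∀ n : ℕ, ((t * n / (n + 1), -t) : ℝ × ℝ) ∈ ⋃ m : ℕ, K m := by
    intro n
    refine Set.mem_iUnion.2 ⟨n + 1, ⟨t / (n + 1), 0, ?_, le_refl _, ?_⟩⟩
    · positivity
    · have hn : ((n : ℝ) + 1) ≠ 0 := by positivity
      simp only [v, Prod.ext_iff, Prod.fst_add, Prod.snd_add, Prod.smul_mk,
        smul_eq_mul, push_cast]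
      push_cast
      constructor <;> field_simp <;> ring
  have htend : Filter.Tendsto (fun n : ℕ => ((t * n / (n + 1), -t) : ℝ × ℝ))
      Filter.atTop (nhds ((t, -t) : ℝ × ℝ)) := by
    refine Filter.Tendsto.prodMk_nhds ?_ tendsto_const_nhds
    have h1 : Filter.Tendsto (fun n : ℕ => ((n : ℝ) / (n + 1))) Filter.atTop (nhds 1) :=
      tendsto_natCast_div_add_atTop (1 : ℝ)
    have := h1.const_mul t
    simpa [mul_div_assoc] using this
  exact mem_closure_of_tendsto htend (Filter.Eventually.of_forall hmem)
end

section
/- Define a : ℕ → ℝ² by a₀ = (1,0), a₁ = (0,-1), and a_m = (1-m, m-2) for m ≥ 2, and define u : ℕ → ℝ² by u_m = (1-m, m) (so u₀ = (1,0), u₁ = (0,1), u₂ = (-1,2), …). Let the cones be A m = {s • a_m + t • a_{m+1} | s, t ≥ 0} and U m = {s • u_m + t • u_{m+1} | s, t ≥ 0}. Then the topological closure of (⋃_{m ∈ ℕ} A m) ∪ (⋃_{m ∈ ℕ} U m) equals ℝ². -/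
/-- g-vectors of the lower row of clusters of the Kronecker quiver. -/
noncomputable def a : ℕ → ℝ × ℝ
  | 0 => (1, 0)
  | 1 => (0, -1)
  | (m + 2) => (1 - ((m : ℝ) + 2), ((m : ℝ) + 2) - 2)

/-- g-vectors of the upper row of clusters of the Kronecker quiver. -/
noncomputable def u (m : ℕ) : ℝ × ℝ := (1 - (m : ℝ), (m : ℝ))

noncomputable def A (m : ℕ) : Set (ℝ × ℝ) :=
  {x | ∃ s t : ℝ, 0 ≤ s ∧ 0 ≤ t ∧ x = s • a m + t • a (m + 1)}

noncomputable def U (m : ℕ) : Set (ℝ × ℝ) :=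
  {x | ∃ s t : ℝ, 0 ≤ s ∧ 0 ≤ t ∧ x = s • u m + t • u (m + 1)}

lemma a_formula (m : ℕ) (hm : 1 ≤ m) : a m = (1 - (m : ℝ), (m : ℝ) - 2) := by
  match m, hm with
  | 1, _ => norm_num [a]
  | (k+2), _ => simp [a]

lemma key (w : ℝ × ℝ) (hw : w.1 + w.2 ≠ 0) :
    w ∈ (⋃ m : ℕ, A m) ∪ (⋃ m : ℕ, U m) := by
  rcases le_or_gt 0 w.1 with h1 | h1
  · rcases le_or_gt 0 w.2 with h2 | h2
    · -- first quadrant : U 0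
      refine Or.inr (Set.mem_iUnion.mpr ⟨0, w.1, w.2, h1, h2, ?_⟩)
      simp only [u, Prod.ext_iff, Prod.smul_mk, Prod.mk_add_mk, smul_eq_mul]
      push_cast; constructor <;> ring
    · -- fourth quadrant : A 0
      refine Or.inl (Set.mem_iUnion.mpr ⟨0, w.1, -w.2, h1, by linarith, ?_⟩)
      have h0 : a 0 = (1, 0) := by simp [a]
      have h1' : a 1 = (0, -1) := by simp [a]
      rw [h0, h1']
      simp only [Prod.ext_iff, Prod.smul_mk, Prod.mk_add_mk, smul_eq_mul]
      constructor <;> ring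
  · rcases hw.lt_or_gt with hd | hd
    · -- w.1 + w.2 < 0, w.1 < 0 : an A cone
      set d := w.1 + w.2 with hdef
      have hd0 : d < 0 := hd
      set c := w.1 / d with hc
      have hc0 : 0 < c := div_pos_of_neg_of_neg h1 hd0
      set m := ⌈c⌉₊ with hm
      have hm1 : 1 ≤ m := Nat.one_le_ceil_iff.mpr hc0
      have hcm : c ≤ (m : ℝ) := Nat.le_ceil c
      have hcm' : (m : ℝ) < c + 1 := Nat.ceil_lt_add_one hc0.le
      have hcd : c * d = w.1 := div_mul_cancel₀ w.1 (ne_of_lt hd0)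
      have hs' : (m : ℝ) * d ≤ w.1 := by
        have := mul_le_mul_of_nonpos_right hcm (le_of_lt hd0)
        linarith
      have ht' : w.1 ≤ ((m : ℝ) - 1) * d := by
        have h' : (m : ℝ) - 1 < c := by linarith
        have := mul_le_mul_of_nonpos_right (le_of_lt h') (le_of_lt hd0)
        linarith
      refine Or.inl (Set.mem_iUnion.mpr
        ⟨m, w.1 - m * d, (m - 1) * d - w.1, by linarith, by linarith, ?_⟩)
      rw [a_formula m hm1, a_formula (m + 1) (by omega)]
      simp only [Prod.ext_iff, Prod.smul_mk, Prod.mk_add_mk, smul_eq_mul]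
      have hw2 : w.2 = d - w.1 := by rw [hdef]; ring
      rw [hw2]
      push_cast
      constructor <;> ring
    · -- w.1 + w.2 > 0, w.1 < 0 : a U cone
      set d := w.1 + w.2 with hdef
      have hd0 : 0 < d := hd
      set c := -w.1 / d with hc
      have hc0 : 0 < c := div_pos (by linarith) hd0
      set m := ⌈c⌉₊ with hm
      have hcm : c ≤ (m : ℝ) := Nat.le_ceil c
      have hcm' : (m : ℝ) < c + 1 := Nat.ceil_lt_add_one hc0.le
      have hcd : c * d = -w.1 := div_mul_cancel₀ (-w.1) (ne_of_gt hd0)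
      have hs' : -w.1 ≤ (m : ℝ) * d := by
        have := mul_le_mul_of_nonneg_right hcm (le_of_lt hd0)
        linarith
      have ht' : (m : ℝ) * d ≤ d - w.1 := by
        have := mul_le_mul_of_nonneg_right (le_of_lt hcm') (le_of_lt hd0)
        linarith
      have hw2 : w.2 = d - w.1 := by rw [hdef]; ring
      refine Or.inr (Set.mem_iUnion.mpr
        ⟨m, m * d + w.1, w.2 - m * d, by linarith, by rw [hw2]; linarith, ?_⟩)
      simp only [u, Prod.ext_iff, Prod.smul_mk, Prod.mk_add_mk, smul_eq_mul]
      rw [hw2]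
      push_cast
      constructor <;> ring

theorem stmt_15 :
    closure ((⋃ m : ℕ, A m) ∪ (⋃ m : ℕ, U m)) = (Set.univ : Set (ℝ × ℝ)) := by
  apply Set.eq_univ_of_forall
  intro v
  by_cases hv : v.1 + v.2 = 0
  · rw [Metric.mem_closure_iff]
    intro ε hε
    refine ⟨v + (ε / 2, 0), key _ ?_, ?_⟩
    · simp only [Prod.fst_add, Prod.snd_add]
      intro h
      have : v.1 + v.2 + ε / 2 = 0 := by linarith [h]
      linarith [hv ▸ this]
    · have : dist v (v + (ε / 2, 0)) = ε / 2 := by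
        rw [dist_self_add_right, Prod.norm_def]
        simp only [Real.norm_eq_abs, abs_zero]
        rw [abs_of_pos (by linarith : (0:ℝ) < ε / 2)]
        exact max_eq_left (by linarith)
      rw [this]; linarith
  · exact subset_closure (key v hv)
end
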